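/- For the Schwarz lantern, lim_{m→∞} lim_{n→∞} Area(P(m,n)) = 2π, i.e., taking n → ∞ first and then m → ∞, the areas converge to 2π. -/

import Mathlib

open Real Filter Topology

noncomputable def schwarzArea (m n : ℕ) : ℝ :=
  2 * m * n * Real.sin (π / n) *
    Real.sqrt ((1 - Real.cos (π / n)) ^ 2 + (1 / m : ℝ) ^ 2)

lemma sin_div_lim : Tendsto (fun x : ℝ => Real.sin x / x) (𝓝[≠] 0) (𝓝 1) := by
  have h := (Real.hasDerivAt_sin 0)
  rw [hasDerivAt_iff_tendsto_slope] at h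
  rw [Real.cos_zero] at h
  refine h.congr fun x => ?_
  simp [slope_def_field, div_eq_div_iff]

theorem schwarz_lantern_iterated_limit :
    (∀ m : ℕ, 0 < m → Tendsto (fun n => schwarzArea m n) atTop (𝓝 (2 * π))) ∧
      Tendsto (fun _ : ℕ => (2 * π : ℝ)) atTop (𝓝 (2 * π)) := by
  constructor
  · intro m hm
    have hm' : (m : ℝ) ≠ 0 := Nat.cast_ne_zero.mpr hm.ne'
    have h1 : Tendsto (fun n : ℕ => π / n) atTop (𝓝 0) :=
      tendsto_const_div_atTop_nhds_zero_nat π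
    have h1' : Tendsto (fun n : ℕ => π / n) atTop (𝓝[≠] 0) := by
      refine tendsto_nhdsWithin_of_tendsto_nhds_of_eventually_within _ h1 ?_
      filter_upwards [eventually_ge_atTop 1] with n hn
      have : (0:ℝ) < π / n := div_pos Real.pi_pos (by exact_mod_cast hn)
      exact this.ne'
    have hA : Tendsto (fun n : ℕ => Real.sin (π / n) / (π / n)) atTop (𝓝 1) :=
      sin_div_lim.comp h1'
    have hB : Tendsto (fun n : ℕ => Real.cos (π / n)) atTop (𝓝 1) := by
      have := (Real.continuous_cos.tendsto 0).comp h1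
      simpa [Function.comp_def] using this
    have hC : Tendsto (fun n : ℕ =>
        Real.sqrt ((1 - Real.cos (π / n)) ^ 2 + (1 / m : ℝ) ^ 2)) atTop (𝓝 (1 / m)) := by
      have : Tendsto (fun n : ℕ => (1 - Real.cos (π / n)) ^ 2 + (1 / m : ℝ) ^ 2) atTop
          (𝓝 ((1 - 1) ^ 2 + (1 / m : ℝ) ^ 2)) := by
        exact (((tendsto_const_nhds.sub hB).pow 2).add tendsto_const_nhds)
      have h2 := (Real.continuous_sqrt.tendsto _).comp this
      simpa [Function.comp_def, Real.sqrt_eq_iff_eq_sq, Real.sqrt_sq (by positivity : (0:ℝ) ≤ 1 / (m:ℝ))]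
        using h2
    have key : Tendsto (fun n : ℕ =>
        π * (Real.sin (π / n) / (π / n)) * (2 * m *
          Real.sqrt ((1 - Real.cos (π / n)) ^ 2 + (1 / m : ℝ) ^ 2))) atTop
        (𝓝 (π * 1 * (2 * m * (1 / m)))) := by
      exact (tendsto_const_nhds.mul hA).mul ((tendsto_const_nhds.mul hC))
    have heq : π * 1 * (2 * (m:ℝ) * (1 / m)) = 2 * π := by
      field_simp
    rw [heq] at key
    refine key.congr' ?_
    filter_upwards [eventually_ge_atTop 1] with n hn
    have hn' : (n:ℝ) ≠ 0 := Nat.cast_ne_zero.mpr (by omega)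
    have hπn : π / n ≠ 0 := by positivity
    unfold schwarzArea
    field_simp
  · exact tendsto_const_nhds
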